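/- The polynomials F_n(x,q) satisfy F_n(x,q) = (x + (1-q)D_q) F_{n-1}(x,q) - F_{n-2}(x,q) for n ≥ 2, where D_q is the q-derivative operator. -/

import Mathlib

/-- The q-Pochhammer symbol `(a;q)_n`. -/
noncomputable def qPoch (a q : ℝ) (n : ℕ) : ℝ := ∏ j ∈ Finset.range n, (1 - q ^ j * a)

/-- The Gaussian (q-)binomial coefficient `[n choose k]_q`. -/
noncomputable def qbinom (q : ℝ) (n k : ℕ) : ℝ :=
  qPoch q q n / (qPoch q q k * qPoch q q (n - k))

noncomputable def cc (q : ℝ) (n k : ℕ) : ℝ :=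
  q ^ (k * (k + 1) / 2) * qbinom q (n - k) k * (-1 : ℝ) ^ k

lemma qPoch_pos {q : ℝ} (hq0 : 0 < q) (hq1 : q < 1) (n : ℕ) : 0 < qPoch q q n := by
  unfold qPoch
  apply Finset.prod_pos
  intro j _
  have : q ^ j * q < 1 := by
    have := pow_lt_one₀ (le_of_lt hq0) hq1 (n := j + 1) (by omega)
    rwa [pow_succ] at this
  linarith

lemma qPoch_ne {q : ℝ} (hq0 : 0 < q) (hq1 : q < 1) (n : ℕ) : qPoch q q n ≠ 0 :=
  ne_of_gt (qPoch_pos hq0 hq1 n)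

lemma one_sub_pow_ne {q : ℝ} (hq0 : 0 < q) (hq1 : q < 1) (n : ℕ) (hn : 1 ≤ n) :
    (1 : ℝ) - q ^ n ≠ 0 := by
  have : q ^ n < 1 := pow_lt_one₀ (le_of_lt hq0) hq1 (by omega)
  linarith

lemma qPoch_succ (q : ℝ) (n : ℕ) : qPoch q q (n + 1) = qPoch q q n * (1 - q ^ (n + 1)) := by
  unfold qPoch
  rw [Finset.prod_range_succ, ← pow_succ]

lemma qPoch_zero (q : ℝ) : qPoch q q 0 = 1 := by simp [qPoch]

lemma cc_zero {q : ℝ} (hq0 : 0 < q) (hq1 : q < 1) (n : ℕ) : cc q n 0 = 1 := by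
  simp [cc, qbinom, qPoch_zero, div_self (qPoch_ne hq0 hq1 n)]

lemma cc_formula (q : ℝ) (k d : ℕ) : cc q (2*k+d) k =
    q ^ (k*(k+1)/2) * (qPoch q q (k+d) / (qPoch q q k * qPoch q q d)) * (-1 : ℝ)^k := by
  unfold cc qbinom
  rw [show 2*k+d-k = k+d from by omega, show k+d-k = d from by omega]

lemma hT (a : ℕ) : (a+1)*((a+1)+1)/2 = a*(a+1)/2 + (a+1) := by
  rw [show (a+1)*((a+1)+1) = a*(a+1) + (a+1)*2 from by ring,
    Nat.add_mul_div_right _ _ (by norm_num)]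

lemma cc_main {q : ℝ} (hq0 : 0 < q) (hq1 : q < 1) (a b : ℕ) :
    cc q (2*a+b+3) (a+1) = cc q (2*a+b+2) (a+1)
      + (1 - q^(b+2)) * cc q (2*a+b+2) a - cc q (2*a+b+1) a := by
  have E1 := cc_formula q (a+1) (b+1)
  have E2 := cc_formula q (a+1) b
  have E3 := cc_formula q a (b+2)
  have E4 := cc_formula q a (b+1)
  rw [show 2*(a+1)+(b+1) = 2*a+b+3 from by ring, show (a+1)+(b+1) = (a+b+1)+1 from by ring] at E1
  rw [show 2*(a+1)+b = 2*a+b+2 from by ring, show (a+1)+b = a+b+1 from by ring] at E2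
  rw [show 2*a+(b+2) = 2*a+b+2 from by ring, show a+(b+2) = (a+b+1)+1 from by ring] at E3
  rw [show 2*a+(b+1) = 2*a+b+1 from by ring, show a+(b+1) = a+b+1 from by ring] at E4
  rw [E1, E2, E3, E4, hT a, qPoch_succ q (a+b+1), qPoch_succ q a,
    qPoch_succ q (b+1), qPoch_succ q b, pow_add, pow_succ (-1 : ℝ) a]
  have n1 := qPoch_ne hq0 hq1 a
  have n2 := qPoch_ne hq0 hq1 b
  have n3 := qPoch_ne hq0 hq1 (a+b+1)
  have n4 := one_sub_pow_ne hq0 hq1 (a+1) (by omega)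
  have n5 := one_sub_pow_ne hq0 hq1 (b+1) (by omega)
  have n6 := one_sub_pow_ne hq0 hq1 (b+2) (by omega)
  field_simp
  ring

lemma qPoch_one (q : ℝ) : qPoch q q 1 = 1 - q := by simp [qPoch]

lemma cc_top {q : ℝ} (hq0 : 0 < q) (hq1 : q < 1) (a : ℕ) :
    cc q (2*a+2) (a+1) = (1-q) * cc q (2*a+1) a - cc q (2*a) a := by
  have E1 := cc_formula q (a+1) 0
  have E2 := cc_formula q a 1
  have E3 := cc_formula q a 0
  rw [show 2*(a+1)+0 = 2*a+2 from by ring, show (a+1)+0 = a+1 from by ring] at E1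
  rw [show 2*a+1 = 2*a+1 from rfl, show a+1 = a+1 from rfl] at E2
  rw [show 2*a+0 = 2*a from by ring, show a+0 = a from by ring] at E3
  rw [E1, E2, E3, hT a, qPoch_succ q a, qPoch_zero, qPoch_one, pow_add,
    pow_succ (-1 : ℝ) a]
  have n1 := qPoch_ne hq0 hq1 a
  have n4 := one_sub_pow_ne hq0 hq1 (a+1) (by omega)
  have n7 : (1 : ℝ) - q ≠ 0 := by linarith
  field_simp
  ring

open Polynomial in
lemma Dq_sum (q : ℝ) (s : Finset ℕ) (a : ℕ → ℝ) (e : ℕ → ℕ) :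
    ((∑ k ∈ s, C (a k) * X ^ e k).sum
      fun n x => C (x * ((1 - q ^ n) / (1 - q))) * X ^ (n - 1))
    = ∑ k ∈ s, C (a k * ((1 - q ^ (e k)) / (1 - q))) * X ^ (e k - 1) := by
  set f : ℕ → ℝ → Polynomial ℝ := fun n x => C (x * ((1 - q ^ n) / (1 - q))) * X ^ (n - 1)
    with hf
  have hf0 : ∀ i, f i 0 = 0 := by intro i; simp [hf]
  have hfadd : ∀ i x y, f i (x + y) = f i x + f i y := by
    intro i x y; simp [hf, add_mul, C_add]
  induction s using Finset.cons_induction with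
  | empty => simp
  | cons i s his ih =>
    rw [Finset.sum_cons, Finset.sum_cons, Polynomial.sum_add_index _ _ _ hf0 hfadd,
      C_mul_X_pow_eq_monomial, Polynomial.sum_monomial_index _ _ (hf0 _), ih]

open Polynomial Finset in
theorem curious_q_fib_operator_recurrence (q : ℝ) (hq0 : 0 < q) (hq1 : q < 1)
    (Dq : Polynomial ℝ → Polynomial ℝ)
    (hDq : ∀ p : Polynomial ℝ, Dq p =
      p.sum fun n a => Polynomial.C (a * ((1 - q ^ n) / (1 - q))) * Polynomial.X ^ (n - 1))
    (F : ℕ → Polynomial ℝ)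
    (hF : ∀ n, F n = ∑ k ∈ Finset.range (n / 2 + 1),
      Polynomial.C (q ^ (k * (k + 1) / 2) * qbinom q (n - k) k * (-1 : ℝ) ^ k) *
        Polynomial.X ^ (n - 2 * k)) :
    ∀ n, 2 ≤ n →
      F n = Polynomial.X * F (n - 1) + Polynomial.C (1 - q) * Dq (F (n - 1))
        - F (n - 2) := by
  have hq : (1 : ℝ) - q ≠ 0 := by linarith
  have hF' : ∀ n, F n = ∑ k ∈ Finset.range (n / 2 + 1),
      C (cc q n k) * X ^ (n - 2 * k) := by
    intro n; rw [hF]; simp only [cc]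
  intro n hn
  obtain ⟨m, hm | hm⟩ : ∃ m, n = 2*m+2 ∨ n = 2*m+3 := ⟨(n-2)/2, by omega⟩
  · subst hm
    rw [show 2*m+2-1 = 2*m+1 from by omega, show 2*m+2-2 = 2*m from by omega,
      hF' (2*m+2), hF' (2*m+1), hF' (2*m),
      show (2*m+2)/2+1 = m+2 from by omega, show (2*m+1)/2+1 = m+1 from by omega,
      show (2*m)/2+1 = m+1 from by omega, hDq,
      Dq_sum q (range (m+1)) (fun k => cc q (2*m+1) k) (fun k => 2*m+1 - 2*k),
      Finset.mul_sum, Finset.mul_sum]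
    -- canonicalize the three RHS sums
    have S1 : ∑ k ∈ range (m+1), X * (C (cc q (2*m+1) k) * X ^ (2*m+1 - 2*k))
        = ∑ k ∈ range (m+1), C (cc q (2*m+1) k) * X ^ (2*m+2 - 2*k) := by
      refine Finset.sum_congr rfl fun k hk => ?_
      have hk' : k ≤ m := by simpa using Nat.lt_succ_iff.mp (mem_range.mp hk)
      rw [show 2*m+2-2*k = (2*m+1-2*k)+1 from by omega, pow_succ]
      ring
    have S2 : ∑ k ∈ range (m+1),
        C (1-q) * (C (cc q (2*m+1) k * ((1 - q ^ (2*m+1 - 2*k)) / (1 - q))) * X ^ (2*m+1 - 2*k - 1))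
        = ∑ k ∈ range (m+1),
          C (cc q (2*m+1) k * (1 - q ^ (2*m+1 - 2*k))) * X ^ (2*m - 2*k) := by
      refine Finset.sum_congr rfl fun k hk => ?_
      have hk' : k ≤ m := by simpa using Nat.lt_succ_iff.mp (mem_range.mp hk)
      rw [show 2*m+1-2*k-1 = 2*m-2*k from by omega, ← mul_assoc, ← C_mul]
      congr 2
      field_simp
    rw [S1, S2, add_sub_assoc, ← Finset.sum_sub_distrib]
    have S3 : ∑ k ∈ range (m+1),
        (C (cc q (2*m+1) k * (1 - q ^ (2*m+1 - 2*k))) * X ^ (2*m - 2*k)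
          - C (cc q (2*m) k) * X ^ (2*m - 2*k))
        = ∑ k ∈ range (m+1),
          C (cc q (2*m+1) k * (1 - q ^ (2*m+1 - 2*k)) - cc q (2*m) k) * X ^ (2*m - 2*k) := by
      refine Finset.sum_congr rfl fun k _ => ?_
      rw [C_sub, sub_mul]
    rw [S3, Finset.sum_range_succ'
        (fun k => C (cc q (2*m+2) k) * X ^ (2*m+2 - 2*k)) (m+1),
      Finset.sum_range_succ' (fun k => C (cc q (2*m+1) k) * X ^ (2*m+2 - 2*k)) m,
      Finset.sum_range_succ
        (fun k => C (cc q (2*m+2) (k+1)) * X ^ (2*m+2 - 2*(k+1))) m,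
      Finset.sum_range_succ
        (fun k => C (cc q (2*m+1) k * (1 - q ^ (2*m+1 - 2*k)) - cc q (2*m) k) * X ^ (2*m - 2*k)) m]
    have h0 : C (cc q (2*m+2) 0) * X ^ (2*m+2 - 2*0)
        = C (cc q (2*m+1) 0) * X ^ (2*m+2 - 2*0) := by
      rw [cc_zero hq0 hq1, cc_zero hq0 hq1]
    have htop : C (cc q (2*m+2) (m+1)) * X ^ (2*m+2 - 2*(m+1))
        = C (cc q (2*m+1) m * (1 - q ^ (2*m+1 - 2*m)) - cc q (2*m) m) * X ^ (2*m - 2*m) := by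
      rw [show 2*m+2-2*(m+1) = 0 from by omega, show 2*m-2*m = 0 from by omega,
        show 2*m+1-2*m = 1 from by omega, pow_one, cc_top hq0 hq1 m]
      ring_nf
    have hmid : ∑ k ∈ range m, C (cc q (2*m+2) (k+1)) * X ^ (2*m+2 - 2*(k+1))
        = (∑ k ∈ range m, C (cc q (2*m+1) (k+1)) * X ^ (2*m+2 - 2*(k+1)))
          + ∑ k ∈ range m,
            C (cc q (2*m+1) k * (1 - q ^ (2*m+1 - 2*k)) - cc q (2*m) k) * X ^ (2*m - 2*k) := by
      rw [← Finset.sum_add_distrib]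
      refine Finset.sum_congr rfl fun k hk => ?_
      have hk' : k < m := mem_range.mp hk
      have hb := cc_main hq0 hq1 k (2*(m-k)-1)
      rw [show 2*k+(2*(m-k)-1)+3 = 2*m+2 from by omega,
        show 2*k+(2*(m-k)-1)+2 = 2*m+1 from by omega,
        show 2*k+(2*(m-k)-1)+1 = 2*m from by omega,
        show 2*(m-k)-1+2 = 2*m+1-2*k from by omega] at hb
      rw [show 2*m+2-2*(k+1) = 2*m-2*k from by omega, hb, ← add_mul, ← C_add]
      congr 1
      ring
    rw [h0, htop, hmid]
    ring
  · subst hm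
    rw [show 2*m+3-1 = 2*m+2 from by omega, show 2*m+3-2 = 2*m+1 from by omega,
      hF' (2*m+3), hF' (2*m+2), hF' (2*m+1),
      show (2*m+3)/2+1 = m+2 from by omega, show (2*m+2)/2+1 = m+2 from by omega,
      show (2*m+1)/2+1 = m+1 from by omega, hDq,
      Dq_sum q (range (m+2)) (fun k => cc q (2*m+2) k) (fun k => 2*m+2 - 2*k),
      Finset.mul_sum, Finset.mul_sum]
    have S1 : ∑ k ∈ range (m+2), X * (C (cc q (2*m+2) k) * X ^ (2*m+2 - 2*k))
        = ∑ k ∈ range (m+2), C (cc q (2*m+2) k) * X ^ (2*m+3 - 2*k) := by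
      refine Finset.sum_congr rfl fun k hk => ?_
      have hk' : k ≤ m+1 := by simpa using Nat.lt_succ_iff.mp (mem_range.mp hk)
      rw [show 2*m+3-2*k = (2*m+2-2*k)+1 from by omega, pow_succ]
      ring
    have S2 : ∑ k ∈ range (m+2),
        C (1-q) * (C (cc q (2*m+2) k * ((1 - q ^ (2*m+2 - 2*k)) / (1 - q))) * X ^ (2*m+2 - 2*k - 1))
        = ∑ k ∈ range (m+1),
          C (cc q (2*m+2) k * (1 - q ^ (2*m+2 - 2*k))) * X ^ (2*m+1 - 2*k) := by
      rw [Finset.sum_range_succ]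
      rw [show 2*m+2-2*(m+1) = 0 from by omega]
      simp only [pow_zero, sub_self, mul_zero, zero_div, zero_mul, map_zero,
        mul_zero, add_zero]
      refine Finset.sum_congr rfl fun k hk => ?_
      have hk' : k ≤ m := by simpa using Nat.lt_succ_iff.mp (mem_range.mp hk)
      rw [show 2*m+2-2*k-1 = 2*m+1-2*k from by omega, ← mul_assoc, ← C_mul]
      congr 2
      field_simp
    rw [S1, S2, add_sub_assoc, ← Finset.sum_sub_distrib]
    have S3 : ∑ k ∈ range (m+1),
        (C (cc q (2*m+2) k * (1 - q ^ (2*m+2 - 2*k))) * X ^ (2*m+1 - 2*k)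
          - C (cc q (2*m+1) k) * X ^ (2*m+1 - 2*k))
        = ∑ k ∈ range (m+1),
          C (cc q (2*m+2) k * (1 - q ^ (2*m+2 - 2*k)) - cc q (2*m+1) k) * X ^ (2*m+1 - 2*k) := by
      refine Finset.sum_congr rfl fun k _ => ?_
      rw [C_sub, sub_mul]
    rw [S3, Finset.sum_range_succ'
        (fun k => C (cc q (2*m+3) k) * X ^ (2*m+3 - 2*k)) (m+1),
      Finset.sum_range_succ' (fun k => C (cc q (2*m+2) k) * X ^ (2*m+3 - 2*k)) (m+1)]
    have h0 : C (cc q (2*m+3) 0) * X ^ (2*m+3 - 2*0)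
        = C (cc q (2*m+2) 0) * X ^ (2*m+3 - 2*0) := by
      rw [cc_zero hq0 hq1, cc_zero hq0 hq1]
    have hmid : ∑ k ∈ range (m+1), C (cc q (2*m+3) (k+1)) * X ^ (2*m+3 - 2*(k+1))
        = (∑ k ∈ range (m+1), C (cc q (2*m+2) (k+1)) * X ^ (2*m+3 - 2*(k+1)))
          + ∑ k ∈ range (m+1),
            C (cc q (2*m+2) k * (1 - q ^ (2*m+2 - 2*k)) - cc q (2*m+1) k) * X ^ (2*m+1 - 2*k) := by
      rw [← Finset.sum_add_distrib]
      refine Finset.sum_congr rfl fun k hk => ?_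
      have hk' : k ≤ m := by simpa using Nat.lt_succ_iff.mp (mem_range.mp hk)
      have hb := cc_main hq0 hq1 k (2*(m-k))
      rw [show 2*k+(2*(m-k))+3 = 2*m+3 from by omega,
        show 2*k+(2*(m-k))+2 = 2*m+2 from by omega,
        show 2*k+(2*(m-k))+1 = 2*m+1 from by omega,
        show 2*(m-k)+2 = 2*m+2-2*k from by omega] at hb
      rw [show 2*m+3-2*(k+1) = 2*m+1-2*k from by omega, hb, ← add_mul, ← C_add]
      congr 1
      ring
    rw [h0, hmid]
    ring
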